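/- Let p be a prime, q = p^m, and let h, m be positive integers with gcd(h, m) = ℓ. Then gcd(p^h + 1, q - 1) equals 1 if m/ℓ is odd and p = 2; equals 2 if m/ℓ is odd and p is odd; and equals p^ℓ + 1 if m/ℓ is even. -/

import Mathlib

lemma aux_gcd_pow (a n k d : ℕ) (ha : 1 ≤ a) (hd : 0 < d)
    (h1 : d ∣ a ^ n - 1) (h2 : d ∣ a ^ k - 1) : d ∣ a ^ Nat.gcd n k - 1 := by
  haveI : NeZero d := ⟨hd.ne'⟩
  have hp1 : ∀ j : ℕ, 1 ≤ a ^ j := fun j => Nat.one_le_pow _ _ ha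
  have cast1 : ∀ j : ℕ, d ∣ a ^ j - 1 → (a : ZMod d) ^ j = 1 := by
    intro j hj
    have : ((a ^ j - 1 : ℕ) : ZMod d) = 0 := (ZMod.natCast_eq_zero_iff _ _).mpr hj
    rw [Nat.cast_sub (hp1 j), Nat.cast_pow, Nat.cast_one, sub_eq_zero] at this
    exact this
  have := pow_gcd_eq_one.mpr (And.intro (cast1 n h1) (cast1 k h2))
  rw [← Nat.cast_pow, ← sub_eq_zero, ← Nat.cast_one, ← Nat.cast_sub (hp1 _)] at this
  exact (ZMod.natCast_eq_zero_iff _ _).mp this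

theorem stmt0 (p m h ℓ : ℕ) (hp : p.Prime) (hm : 0 < m) (hh : 0 < h)
    (hℓ : ℓ = Nat.gcd h m) :
    (Odd (m / ℓ) → p = 2 → Nat.gcd (p ^ h + 1) (p ^ m - 1) = 1) ∧
    (Odd (m / ℓ) → Odd p → Nat.gcd (p ^ h + 1) (p ^ m - 1) = 2) ∧
    (Even (m / ℓ) → Nat.gcd (p ^ h + 1) (p ^ m - 1) = p ^ ℓ + 1) := by
  have hp2 : 2 ≤ p := hp.two_le
  have hpow1 : ∀ j : ℕ, 1 ≤ p ^ j := fun j => Nat.one_le_pow _ _ (by omega)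
  have hℓh : ℓ ∣ h := hℓ ▸ Nat.gcd_dvd_left h m
  have hℓm : ℓ ∣ m := hℓ ▸ Nat.gcd_dvd_right h m
  have hℓpos : 0 < ℓ := hℓ ▸ Nat.gcd_pos_of_pos_left m hh
  set d := Nat.gcd (p ^ h + 1) (p ^ m - 1) with hdDef
  have hd1 : d ∣ p ^ h + 1 := Nat.gcd_dvd_left _ _
  have hd2 : d ∣ p ^ m - 1 := Nat.gcd_dvd_right _ _
  have hdpos : 0 < d := Nat.gcd_pos_of_pos_left _ (by positivity)
  -- d ∣ p^(2h) - 1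
  have hd2h : d ∣ p ^ (2 * h) - 1 := by
    refine hd1.trans ?_
    have : p ^ (2 * h) - 1 = (p ^ h + 1) * (p ^ h - 1) := by
      rw [mul_comm 2 h, pow_mul, ← one_pow 2, Nat.sq_sub_sq, one_pow]
    rw [this]
    exact Dvd.intro _ rfl
  have hkey : d ∣ p ^ Nat.gcd (2 * h) m - 1 :=
    aux_gcd_pow p (2 * h) m d (by omega) hdpos hd2h hd2
  -- gcd(2h, m) divides 2ℓ
  have hg2ℓ : Nat.gcd (2 * h) m ∣ 2 * ℓ := by
    have : Nat.gcd (2 * h) m ∣ Nat.gcd (2 * h) (2 * m) :=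
      Nat.dvd_gcd (Nat.gcd_dvd_left _ _) ((Nat.gcd_dvd_right _ _).mul_left 2)
    rwa [Nat.gcd_mul_left, ← hℓ] at this
  have hℓg : ℓ ∣ Nat.gcd (2 * h) m := Nat.dvd_gcd (hℓh.mul_left 2) hℓm
  -- shared fact for odd case
  have key_odd : Odd (m / ℓ) → d ∣ 2 := by
    intro hodd
    have hgℓ : Nat.gcd (2 * h) m = ℓ := by
      obtain ⟨t, ht⟩ := hℓg
      have ht2 : t ∣ 2 := by
        have : ℓ * t ∣ ℓ * 2 := by rw [← ht]; rwa [mul_comm 2 ℓ] at hg2ℓ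
        exact (Nat.mul_dvd_mul_iff_left hℓpos).mp this
      rcases (Nat.dvd_prime Nat.prime_two).mp ht2 with rfl | rfl
      · omega
      · exfalso
        have h2ℓm : ℓ * 2 ∣ m := ht ▸ Nat.gcd_dvd_right (2 * h) m
        obtain ⟨s, hs⟩ := h2ℓm
        have : m / ℓ = 2 * s := by
          rw [hs, mul_assoc, Nat.mul_div_cancel_left _ hℓpos]
        rw [this] at hodd
        exact (Nat.not_odd_iff_even.mpr ⟨s, by ring⟩) hodd
    rw [hgℓ] at hkey
    have hdvdh : d ∣ p ^ h - 1 := by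
      refine hkey.trans ?_
      obtain ⟨k, hk⟩ := id hℓh
      have : p ^ h = (p ^ ℓ) ^ k := by rw [← pow_mul, ← hk]
      rw [this]
      simpa using Nat.sub_dvd_pow_sub_pow (p ^ ℓ) 1 k
    have hsub := Nat.dvd_sub hd1 hdvdh
    have hph := hpow1 h
    have heq2 : (p ^ h + 1) - (p ^ h - 1) = 2 := by omega
    rwa [heq2] at hsub
  refine ⟨?_, ?_, ?_⟩
  · -- m/ℓ odd, p = 2
    rintro hodd rfl
    have hd2' := key_odd hodd
    rcases (Nat.dvd_prime Nat.prime_two).mp hd2' with h1 | h1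
    · exact h1
    · exfalso
      have h2d : (2 : ℕ) ∣ 2 ^ h + 1 := h1 ▸ hd1
      have h2p : (2 : ℕ) ∣ 2 ^ h := dvd_pow_self 2 hh.ne'
      have := Nat.dvd_sub h2d h2p
      simp at this
  · -- m/ℓ odd, p odd
    intro hodd hpodd
    have hd2' := key_odd hodd
    have hodd_h : Odd (p ^ h) := hpodd.pow
    have hodd_m : Odd (p ^ m) := hpodd.pow
    have h2a : (2 : ℕ) ∣ p ^ h + 1 := by
      obtain ⟨r, hr⟩ := hodd_h; omega
    have h2b : (2 : ℕ) ∣ p ^ m - 1 := by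
      obtain ⟨r, hr⟩ := hodd_m; omega
    exact Nat.dvd_antisymm hd2' (Nat.dvd_gcd h2a h2b)
  · -- m/ℓ even
    intro heven
    -- h/ℓ is odd
    have hcop : Nat.Coprime (h / ℓ) (m / ℓ) := by
      rw [hℓ]; exact Nat.coprime_div_gcd_div_gcd (hℓ ▸ hℓpos)
    have hkodd : Odd (h / ℓ) := by
      rw [← Nat.not_even_iff_odd]
      intro hke
      have h2g : (2 : ℕ) ∣ Nat.gcd (h / ℓ) (m / ℓ) :=
        Nat.dvd_gcd hke.two_dvd heven.two_dvd
      rw [hcop] at h2g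
      omega
    obtain ⟨k, hk⟩ := id hℓh
    have hkval : h / ℓ = k := by rw [hk, Nat.mul_div_cancel_left _ hℓpos]
    rw [hkval] at hkodd
    -- p^ℓ + 1 divides p^h + 1
    have hA : p ^ ℓ + 1 ∣ p ^ h + 1 := by
      have := hkodd.nat_add_dvd_pow_add_pow (p ^ ℓ) 1
      rwa [← pow_mul, ← hk, one_pow] at this
    -- 2ℓ ∣ m
    obtain ⟨j, hj⟩ := hℓm
    have hjeven : Even j := by
      have : m / ℓ = j := by rw [hj, Nat.mul_div_cancel_left _ hℓpos]
      rwa [this] at heven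
    obtain ⟨s, hs⟩ := hjeven
    have hm2ℓ : m = 2 * ℓ * s := by rw [hj, hs]; ring
    -- p^ℓ+1 ∣ p^(2ℓ)-1
    have hsq : p ^ (2 * ℓ) - 1 = (p ^ ℓ + 1) * (p ^ ℓ - 1) := by
      rw [mul_comm 2 ℓ, pow_mul, ← one_pow 2, Nat.sq_sub_sq, one_pow]
    have hB1 : p ^ ℓ + 1 ∣ p ^ (2 * ℓ) - 1 := by rw [hsq]; exact Dvd.intro _ rfl
    have hB2 : p ^ (2 * ℓ) - 1 ∣ p ^ m - 1 := by
      have : p ^ m = (p ^ (2 * ℓ)) ^ s := by rw [← pow_mul, ← hm2ℓ]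
      rw [this]
      simpa using Nat.sub_dvd_pow_sub_pow (p ^ (2 * ℓ)) 1 s
    have hB : p ^ ℓ + 1 ∣ p ^ m - 1 := hB1.trans hB2
    have hlow : p ^ ℓ + 1 ∣ d := Nat.dvd_gcd hA hB
    -- gcd(2h, m) = 2ℓ
    have hg : Nat.gcd (2 * h) m = 2 * ℓ := by
      refine Nat.dvd_antisymm hg2ℓ (Nat.dvd_gcd ?_ ?_)
      · exact Nat.mul_dvd_mul_left 2 hℓh
      · exact ⟨s, hm2ℓ⟩
    rw [hg] at hkey
    -- e := gcd(d, p^ℓ - 1) divides 2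
    set e := Nat.gcd d (p ^ ℓ - 1) with heDef
    have heℓ : e ∣ p ^ ℓ - 1 := Nat.gcd_dvd_right _ _
    have hed : e ∣ d := Nat.gcd_dvd_left _ _
    have he2 : e ∣ 2 := by
      have h1 : e ∣ p ^ h + 1 := hed.trans hd1
      have h2 : e ∣ p ^ h - 1 := by
        refine heℓ.trans ?_
        have : p ^ h = (p ^ ℓ) ^ k := by rw [← pow_mul, ← hk]
        rw [this]
        simpa using Nat.sub_dvd_pow_sub_pow (p ^ ℓ) 1 k
      have hsub := Nat.dvd_sub h1 h2
      have hph := hpow1 h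
      have heq2 : (p ^ h + 1) - (p ^ h - 1) = 2 := by omega
      rwa [heq2] at hsub
    have hepos : 0 < e := Nat.gcd_pos_of_pos_left _ hdpos
    -- d ∣ e * (p^ℓ + 1)
    have hdup : d ∣ e * (p ^ ℓ + 1) := by
      have hcop' : Nat.Coprime (d / e) ((p ^ ℓ - 1) / e) :=
        Nat.coprime_div_gcd_div_gcd hepos
      have hde : e * (d / e) = d := Nat.mul_div_cancel' hed
      have hbe : e * ((p ^ ℓ - 1) / e) = p ^ ℓ - 1 := Nat.mul_div_cancel' heℓ
      have hstep : e * (d / e) ∣ e * (((p ^ ℓ - 1) / e) * (p ^ ℓ + 1)) := by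
        rw [hde, ← mul_assoc, hbe, mul_comm (p ^ ℓ - 1)]
        rwa [hsq] at hkey
      have hd' : d / e ∣ ((p ^ ℓ - 1) / e) * (p ^ ℓ + 1) :=
        (Nat.mul_dvd_mul_iff_left hepos).mp hstep
      have hd'' : d / e ∣ p ^ ℓ + 1 := hcop'.dvd_of_dvd_mul_left hd'
      calc d = e * (d / e) := hde.symm
        _ ∣ e * (p ^ ℓ + 1) := Nat.mul_dvd_mul_left e hd''
    have hd2up : d ∣ 2 * (p ^ ℓ + 1) := hdup.trans (Nat.mul_dvd_mul_right he2 _)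
    -- c := d / (p^ℓ+1) divides 2
    obtain ⟨c, hc⟩ := hlow
    have hc2 : c ∣ 2 := by
      have : (p ^ ℓ + 1) * c ∣ (p ^ ℓ + 1) * 2 := by
        rw [← hc, mul_comm (p ^ ℓ + 1) 2]; exact hd2up
      exact (Nat.mul_dvd_mul_iff_left (by positivity : 0 < p ^ ℓ + 1)).mp this
    rcases (Nat.dvd_prime Nat.prime_two).mp hc2 with rfl | rfl
    · rw [hc, mul_one]
    · exfalso
      rcases hp.eq_two_or_odd' with rfl | hpodd
      · -- p = 2: d even but divides odd number
        have h2d : (2 : ℕ) ∣ d := ⟨(2 ^ ℓ + 1), by rw [hc]; ring⟩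
        have h2a : (2 : ℕ) ∣ 2 ^ h + 1 := h2d.trans hd1
        have h2p : (2 : ℕ) ∣ 2 ^ h := dvd_pow_self 2 hh.ne'
        have := Nat.dvd_sub h2a h2p
        simp at this
      · -- p odd
        have hkpos : 0 < k := by
          rcases Nat.eq_zero_or_pos k with rfl | hk'
          · exfalso; omega
          · exact hk'
        have hℓh' : ℓ ≤ h := Nat.le_of_dvd hh hℓh
        -- 2ℓ ∣ h - ℓ
        obtain ⟨u, hu⟩ := hkodd
        have hhl : h - ℓ = 2 * ℓ * u := by rw [hk, hu]; ring_nf; omega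
        have hD1 : d ∣ p ^ (h - ℓ) - 1 := by
          refine hkey.trans ?_
          have : p ^ (h - ℓ) = (p ^ (2 * ℓ)) ^ u := by rw [← pow_mul, ← hhl]
          rw [this]
          simpa using Nat.sub_dvd_pow_sub_pow (p ^ (2 * ℓ)) 1 u
        have hD2 : d ∣ p ^ h - p ^ ℓ := by
          have heq : p ^ h - p ^ ℓ = (p ^ (h - ℓ) - 1) * p ^ ℓ := by
            rw [Nat.sub_mul, one_mul, ← pow_add]
            congr 2
            omega
          rw [heq]
          exact hD1.mul_right _
        have hD3 := Nat.dvd_sub hd1 hD2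
        have hple : p ^ ℓ ≤ p ^ h := Nat.pow_le_pow_right (by omega) hℓh'
        have heq3 : (p ^ h + 1) - (p ^ h - p ^ ℓ) = p ^ ℓ + 1 := by omega
        rw [heq3] at hD3
        have hle := Nat.le_of_dvd (by positivity) hD3
        rw [hc] at hle
        have := hpow1 ℓ
        omega
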